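/- Let H be a real symmetric N_g × N_g matrix with orthonormal eigenvectors ψ_1, …, ψ_{N_g} and eigenvalues ε_1 ≤ … ≤ ε_{N_g}, let 1 ≤ N_e < N_g, assume the gap ε_{N_e+1} − ε_{N_e} > 0, and set Q = I − Σ_{i=1}^{N_e} ψ_i ψ_iᵀ. Define χ₀ = 2 Σ_{i=1}^{N_e} Σ_{j=N_e+1}^{N_g} (ε_i − ε_j)^{-1} (ψ_i ⊙ ψ_j)(ψ_i ⊙ ψ_j)ᵀ. Then for every vector g ∈ ℝ^{N_g}, χ₀ g = 2 Σ_{i=1}^{N_e} ψ_i ⊙ ζ_i, where for each i, ζ_i is the unique element of the range of Q solving the Steinheimer equation Q(ε_i I − H)Q ζ_i = Q(ψ_i ⊙ g) (such ζ_i exists and is unique since ε_i < ε_{N_e+1}). -/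

import Mathlib

open Matrix

lemma vmv_mulVec {n : ℕ} (a b v : Fin n → ℝ) :
    vecMulVec a b *ᵥ v = (b ⬝ᵥ v) • a := by
  ext r
  simp only [vecMulVec, mulVec, dotProduct, Matrix.of_apply, Pi.smul_apply, smul_eq_mul]
  rw [Finset.sum_mul]
  exact Finset.sum_congr rfl fun x _ => by ring

lemma sum_mulVec' {n : ℕ} {ι : Type*} (s : Finset ι) (M : ι → Matrix (Fin n) (Fin n) ℝ)
    (v : Fin n → ℝ) : (∑ i ∈ s, M i) *ᵥ v = ∑ i ∈ s, M i *ᵥ v := by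
  ext r
  simp only [mulVec, dotProduct, Matrix.sum_apply, Finset.sum_apply, Finset.sum_mul]
  exact Finset.sum_comm

lemma dot_sum' {n : ℕ} {ι : Type*} (s : Finset ι) (a : Fin n → ℝ) (f : ι → Fin n → ℝ) :
    a ⬝ᵥ (∑ i ∈ s, f i) = ∑ i ∈ s, a ⬝ᵥ f i := by
  simp only [dotProduct, Finset.sum_apply, Finset.mul_sum]
  exact Finset.sum_comm

/-- For every g, χ₀ g = 2 Σ_{i occupied} ψ_i ⊙ ζ_i, where each ζ_i is the
(unique) element of the range of Q solving the Steinheimer equation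
Q(ε_i I − H)Q ζ_i = Q(ψ_i ⊙ g). -/
theorem stmt3 (Ng Ne : ℕ) (hNe : 1 ≤ Ne) (hlt : Ne < Ng)
    (H : Matrix (Fin Ng) (Fin Ng) ℝ) (hH : H.IsSymm)
    (ψ : Fin Ng → Fin Ng → ℝ) (ε : Fin Ng → ℝ)
    (horth : ∀ i j : Fin Ng, ψ i ⬝ᵥ ψ j = if i = j then (1 : ℝ) else 0)
    (heig : ∀ i : Fin Ng, H *ᵥ ψ i = ε i • ψ i)
    (hmono : Monotone ε)
    (hgap : ε ⟨Ne - 1, by omega⟩ < ε ⟨Ne, hlt⟩)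
    (Q : Matrix (Fin Ng) (Fin Ng) ℝ)
    (hQ : Q = 1 - ∑ i ∈ Finset.univ.filter (fun i : Fin Ng => (i : ℕ) < Ne),
      vecMulVec (ψ i) (ψ i))
    (χ₀ : Matrix (Fin Ng) (Fin Ng) ℝ)
    (hχ₀ : χ₀ = (2 : ℝ) • ∑ i ∈ Finset.univ.filter (fun i : Fin Ng => (i : ℕ) < Ne),
      ∑ j ∈ Finset.univ.filter (fun j : Fin Ng => Ne ≤ (j : ℕ)),
        (ε i - ε j)⁻¹ • vecMulVec (ψ i * ψ j) (ψ i * ψ j))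
    (g : Fin Ng → ℝ)
    (ζ : Fin Ng → Fin Ng → ℝ)
    (hrange : ∀ i : Fin Ng, (i : ℕ) < Ne → ∃ w, ζ i = Q *ᵥ w)
    (hsol : ∀ i : Fin Ng, (i : ℕ) < Ne →
      (Q * (ε i • (1 : Matrix (Fin Ng) (Fin Ng) ℝ) - H) * Q) *ᵥ ζ i = Q *ᵥ (ψ i * g)) :
    χ₀ *ᵥ g = (2 : ℝ) •
      ∑ i ∈ Finset.univ.filter (fun i : Fin Ng => (i : ℕ) < Ne), ψ i * ζ i := by
  set S := Finset.univ.filter (fun i : Fin Ng => (i : ℕ) < Ne) with hS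
  set T := Finset.univ.filter (fun j : Fin Ng => Ne ≤ (j : ℕ)) with hT
  -- action of Q on a vector
  have hQv : ∀ v : Fin Ng → ℝ, Q *ᵥ v = v - ∑ i ∈ S, (ψ i ⬝ᵥ v) • ψ i := by
    intro v
    rw [hQ, sub_mulVec, one_mulVec, sum_mulVec']
    congr 1
    exact Finset.sum_congr rfl fun i _ => vmv_mulVec _ _ _
  -- dot of ψ k with Q *ᵥ v
  have hdotQ : ∀ (k : Fin Ng) (v : Fin Ng → ℝ),
      ψ k ⬝ᵥ (Q *ᵥ v) = if (k : ℕ) < Ne then 0 else ψ k ⬝ᵥ v := by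
    intro k v
    rw [hQv, dotProduct_sub, dot_sum']
    have : ∀ i ∈ S, ψ k ⬝ᵥ ((ψ i ⬝ᵥ v) • ψ i)
        = if i = k then ψ k ⬝ᵥ v else 0 := by
      intro i hi
      rw [dotProduct_smul, horth, smul_eq_mul]
      by_cases h : i = k
      · subst h; simp
      · simp only [if_neg h]
        rw [if_neg (fun hh => h hh.symm), mul_zero]
    rw [Finset.sum_congr rfl this, Finset.sum_ite_eq']
    by_cases hk : (k : ℕ) < Ne <;> simp [hS, hk]
  -- completeness: sum of projectors is identity
  have hcomp : (∑ k : Fin Ng, vecMulVec (ψ k) (ψ k)) = (1 : Matrix (Fin Ng) (Fin Ng) ℝ) := by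
    have h1 : (Matrix.of ψ) * (Matrix.of ψ)ᵀ = 1 := by
      ext i j
      simpa [Matrix.mul_apply, dotProduct, Matrix.one_apply] using horth i j
    have h2 : (Matrix.of ψ)ᵀ * (Matrix.of ψ) = 1 := mul_eq_one_comm.mp h1
    rw [← h2]
    ext a b
    simp [Matrix.mul_apply, vecMulVec, Matrix.sum_apply, mul_comm]
  have hexp : ∀ v : Fin Ng → ℝ, v = ∑ k : Fin Ng, (ψ k ⬝ᵥ v) • ψ k := by
    intro v
    calc v = (∑ k : Fin Ng, vecMulVec (ψ k) (ψ k)) *ᵥ v := by rw [hcomp, one_mulVec]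
    _ = ∑ k : Fin Ng, vecMulVec (ψ k) (ψ k) *ᵥ v := sum_mulVec' _ _ _
    _ = ∑ k : Fin Ng, (ψ k ⬝ᵥ v) • ψ k := Finset.sum_congr rfl fun k _ => vmv_mulVec _ _ _
  -- eigenvalue separation
  have heps : ∀ i ∈ S, ∀ k ∈ T, ε i ≠ ε k := by
    intro i hi k hk
    simp only [hS, hT, Finset.mem_filter] at hi hk
    have h1 : ε i ≤ ε ⟨Ne - 1, by omega⟩ := hmono (by simp [Fin.le_def]; omega)
    have h2 : ε ⟨Ne, hlt⟩ ≤ ε k := hmono (by simp [Fin.le_def]; omega)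
    intro h; rw [h] at h1; linarith
  -- ζ i coefficients
  have hzeta : ∀ i ∈ S, ζ i = ∑ k ∈ T, ((ε i - ε k)⁻¹ * (ψ k ⬝ᵥ (ψ i * g))) • ψ k := by
    intro i hi
    simp only [hS, Finset.mem_filter] at hi
    obtain ⟨w, hw⟩ := hrange i hi.2
    -- coefficients vanish for k < Ne
    have hc0 : ∀ k : Fin Ng, (k : ℕ) < Ne → ψ k ⬝ᵥ ζ i = 0 := by
      intro k hk; rw [hw, hdotQ]; simp [hk]
    have hQζ : Q *ᵥ ζ i = ζ i := by
      rw [hQv]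
      have : ∀ j ∈ S, (ψ j ⬝ᵥ ζ i) • ψ j = 0 := by
        intro j hj
        simp only [hS, Finset.mem_filter] at hj
        rw [hc0 j hj.2, zero_smul]
      rw [Finset.sum_congr rfl this]; simp
    have hck : ∀ k : Fin Ng, Ne ≤ (k : ℕ) →
        ψ k ⬝ᵥ ζ i = (ε i - ε k)⁻¹ * (ψ k ⬝ᵥ (ψ i * g)) := by
      intro k hk
      have hkne : ¬ ((k : ℕ) < Ne) := by omega
      have hne : ε i - ε k ≠ 0 := sub_ne_zero.mpr
        (heps i (by simp [hS, hi.2]) k (by simp [hT, hk]))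
      have heqn := congrArg (fun v => ψ k ⬝ᵥ v) (hsol i hi.2)
      rw [hdotQ k (ψ i * g)] at heqn
      rw [← Matrix.mulVec_mulVec, ← Matrix.mulVec_mulVec, hQζ, hdotQ] at heqn
      simp only [hkne, if_false] at heqn
      rw [sub_mulVec, smul_mulVec, one_mulVec, dotProduct_sub,
        dotProduct_smul] at heqn
      have hHd : ψ k ⬝ᵥ (H *ᵥ ζ i) = ε k * (ψ k ⬝ᵥ ζ i) := by
        rw [dotProduct_mulVec, ← Matrix.mulVec_transpose, hH.eq, heig,
          smul_dotProduct, smul_eq_mul]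
      rw [hHd, smul_eq_mul] at heqn
      field_simp
      linarith [heqn]
    -- expand ζ i
    rw [hexp (ζ i)]
    have hsplit : Finset.univ = S ∪ T := by
      ext k; simp [hS, hT, Finset.mem_union]; omega
    rw [show (Finset.univ : Finset (Fin Ng)) = S ∪ T from hsplit,
      Finset.sum_union (by
        rw [Finset.disjoint_left]; intro a ha hb
        simp only [hS, hT, Finset.mem_filter] at ha hb; omega)]
    have hz : ∀ k ∈ S, (ψ k ⬝ᵥ ζ i) • ψ k = 0 := by
      intro k hk
      simp only [hS, Finset.mem_filter] at hk
      rw [hc0 k hk.2, zero_smul]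
    rw [Finset.sum_congr rfl hz, Finset.sum_const_zero, zero_add]
    refine Finset.sum_congr rfl fun k hk => ?_
    simp only [hT, Finset.mem_filter] at hk
    rw [hck k hk.2]
  -- now compute χ₀ *ᵥ g
  rw [hχ₀, smul_mulVec, sum_mulVec']
  congr 1
  refine Finset.sum_congr rfl fun i hi => ?_
  rw [hzeta i hi, sum_mulVec', Finset.mul_sum]
  refine Finset.sum_congr rfl fun k hk => ?_
  rw [smul_mulVec, vmv_mulVec]
  ext r
  have : (ψ i * ψ k) ⬝ᵥ g = ψ k ⬝ᵥ (ψ i * g) := by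
    simp [dotProduct, Pi.mul_apply]; exact Finset.sum_congr rfl fun x _ => by ring
  rw [this]
  simp [Pi.smul_apply, Pi.mul_apply, smul_eq_mul]; ring
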